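/- If a finite poset P contains the standard example S_3 as a subposet, then the cover graph of P contains a cycle. -/

import Mathlib

/-- `y` covers `x` in the partial order `P`. -/
def Covers {α : Type*} (P : PartialOrder α) (x y : α) : Prop :=
  P.lt x y ∧ ∀ z, P.lt x z → ¬ P.lt z y

/-- The cover graph of a partial order: `x` is adjacent to `y` iff one covers the other. -/
def coverGraph {α : Type*} (P : PartialOrder α) : SimpleGraph α where
  Adj x y := Covers P x y ∨ Covers P y x
  symm := ⟨fun _ _ h => h.symm⟩
  loopless := by
    refine ⟨?_⟩
    intro x h
    letI := P
    rcases h with ⟨h1, _⟩ | ⟨h1, _⟩ <;> exact lt_irrefl x h1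

/-- The strict order of the standard example `S_n` on `Fin n ⊕ Fin n`:
`a_i = Sum.inl i`, `b_j = Sum.inr j`, and the only strict relations are `a_i < b_j` for `i ≠ j`. -/
def stdLT (n : ℕ) : (Fin n ⊕ Fin n) → (Fin n ⊕ Fin n) → Prop
  | Sum.inl i, Sum.inr j => i ≠ j
  | _, _ => False

/-- `P` contains the standard example `S_n` as a subposet. -/
def ContainsStdExample {α : Type*} (P : PartialOrder α) (n : ℕ) : Prop :=
  ∃ f : Fin n ⊕ Fin n → α, Function.Injective f ∧
    ∀ x y, stdLT n x y ↔ P.lt (f x) (f y)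

section Aux

open SimpleGraph

/-- First vertex of a walk belonging to a set `S` (exists when the endpoint is in `S`). -/
lemma exists_firstHit {V : Type*} {G : SimpleGraph V} (S : Set V)
    {u v : V} (w : G.Walk u v) : v ∈ S →
      ∃ m, m ∈ S ∧ ∃ (w1 : G.Walk u m) (w2 : G.Walk m v),
        w = w1.append w2 ∧ ∀ x ∈ w1.support, x ≠ m → x ∉ S := by
  classical
  induction w with
  | nil =>
    intro hv
    exact ⟨_, hv, Walk.nil, Walk.nil, rfl, fun x hx hxm => absurd (by simpa using hx) hxm⟩
  | @cons u u' v h w ih =>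
    intro hv
    by_cases hu : u ∈ S
    · exact ⟨u, hu, Walk.nil, Walk.cons h w, rfl,
        fun x hx hxm => absurd (by simpa using hx) hxm⟩
    · obtain ⟨m, hm, w1, w2, heq, hav⟩ := ih hv
      refine ⟨m, hm, Walk.cons h w1, w2, by rw [Walk.cons_append, heq], ?_⟩
      intro x hx hxm
      rcases List.mem_cons.mp (by simpa [Walk.support_cons] using hx) with rfl | hx'
      · exact hu
      · exact hav x hx' hxm

/-- In an acyclic graph, three paths forming a "triangle" of endpoints
have a common vertex (median). -/
lemma exists_median {V : Type*} {G : SimpleGraph V} (hG : G.IsAcyclic) {x y z : V}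
    {p : G.Walk x y} {q : G.Walk x z} {r : G.Walk y z}
    (hp : p.IsPath) (hq : q.IsPath) (hr : r.IsPath) :
    ∃ m, m ∈ p.support ∧ m ∈ q.support ∧ m ∈ r.support := by
  classical
  have hy : y ∈ p.support := Walk.end_mem_support p
  obtain ⟨m, hmp, w1, w2, heq, hav⟩ :=
    exists_firstHit {t | t ∈ p.support} r.reverse hy
  have hw1path : w1.IsPath := by
    have := hr.reverse
    rw [heq] at this
    exact this.of_append_left
  -- the glued walk from x to z
  have hmp' : m ∈ p.support := hmp
  set W : G.Walk x z := (p.takeUntil m hmp').append w1.reverse with hWdef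
  have hW : W.IsPath := by
    rw [Walk.isPath_def, Walk.support_append]
    apply List.Nodup.append
    · exact (hp.takeUntil hmp').support_nodup
    · exact (List.tail_sublist _).nodup hw1path.reverse.support_nodup
    · intro t ht ht'
      have htp : t ∈ p.support := Walk.support_takeUntil_subset _ _ ht
      have htne : t ≠ m := by
        intro hrfl
        subst hrfl
        have : t :: w1.reverse.support.tail = w1.reverse.support :=
          (Walk.support_eq_cons w1.reverse).symm
        have hn := hw1path.reverse.support_nodup
        rw [← this] at hn
        exact (List.nodup_cons.mp hn).1 ht'
      have htw1 : t ∈ w1.support := by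
        have : t ∈ w1.reverse.support := List.mem_of_mem_tail ht'
        rwa [Walk.support_reverse, List.mem_reverse] at this
      exact hav t htw1 htne htp
  have hWq : W = q := by
    have := hG.path_unique ⟨W, hW⟩ ⟨q, hq⟩
    exact congrArg Subtype.val this
  refine ⟨m, hmp', ?_, ?_⟩
  · rw [← hWq]
    rw [hWdef, Walk.mem_support_append_iff]
    exact Or.inl (Walk.end_mem_support _)
  · have : m ∈ r.reverse.support := by
      rw [heq, Walk.mem_support_append_iff]
      exact Or.inl (Walk.end_mem_support _)
    rwa [Walk.support_reverse, List.mem_reverse] at this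

/-- Every strict relation in a finite poset is witnessed by a monotone walk
in the cover graph. -/
lemma exists_mono_walk {α : Type*} [Fintype α] (P : PartialOrder α) :
    ∀ (n : ℕ) (x y : α), P.lt x y → {z | P.lt x z ∧ P.lt z y}.ncard ≤ n →
      ∃ w : (coverGraph P).Walk x y, ∀ v ∈ w.support, P.le x v ∧ P.le v y := by
  letI := P
  intro n
  induction n with
  | zero =>
    intro x y hxy hcard
    have hE : {z | P.lt x z ∧ P.lt z y} = ∅ := by
      rw [← Set.ncard_eq_zero (Set.toFinite _)]
      omega
    have hcov : Covers P x y := ⟨hxy, fun z hz hz' => by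
      have : z ∈ ({z | P.lt x z ∧ P.lt z y} : Set α) := ⟨hz, hz'⟩
      rw [hE] at this; exact this⟩
    refine ⟨Walk.cons (show (coverGraph P).Adj x y from Or.inl hcov) Walk.nil, ?_⟩
    intro v hv
    rcases (by simpa using hv : v = x ∨ v = y) with rfl | rfl
    · exact ⟨le_refl v, le_of_lt hxy⟩
    · exact ⟨le_of_lt hxy, le_refl v⟩
  | succ n ih =>
    intro x y hxy hcard
    by_cases hE : {z | P.lt x z ∧ P.lt z y} = ∅
    · have hcov : Covers P x y := ⟨hxy, fun z hz hz' => by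
        have : z ∈ ({z | P.lt x z ∧ P.lt z y} : Set α) := ⟨hz, hz'⟩
        rw [hE] at this; exact this⟩
      refine ⟨Walk.cons (show (coverGraph P).Adj x y from Or.inl hcov) Walk.nil, ?_⟩
      intro v hv
      rcases (by simpa using hv : v = x ∨ v = y) with rfl | rfl
      · exact ⟨le_refl v, le_of_lt hxy⟩
      · exact ⟨le_of_lt hxy, le_refl v⟩
    · obtain ⟨z, hz1, hz2⟩ := Set.nonempty_iff_ne_empty.mpr hE
      have hsub1 : {w | P.lt x w ∧ P.lt w z} ⊂ {z | P.lt x z ∧ P.lt z y} := by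
        constructor
        · intro w hw
          exact ⟨hw.1, lt_trans hw.2 hz2⟩
        · intro hcon
          have := hcon ⟨hz1, hz2⟩
          exact lt_irrefl z this.2
      have hsub2 : {w | P.lt z w ∧ P.lt w y} ⊂ {z | P.lt x z ∧ P.lt z y} := by
        constructor
        · intro w hw
          exact ⟨lt_trans hz1 hw.1, hw.2⟩
        · intro hcon
          have := hcon ⟨hz1, hz2⟩
          exact lt_irrefl z this.1
      have hc1 : {w | P.lt x w ∧ P.lt w z}.ncard ≤ n := by
        have := Set.ncard_lt_ncard hsub1 (Set.toFinite _)
        omega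
      have hc2 : {w | P.lt z w ∧ P.lt w y}.ncard ≤ n := by
        have := Set.ncard_lt_ncard hsub2 (Set.toFinite _)
        omega
      obtain ⟨w1, hw1⟩ := ih x z hz1 hc1
      obtain ⟨w2, hw2⟩ := ih z y hz2 hc2
      refine ⟨w1.append w2, ?_⟩
      intro v hv
      rcases (Walk.mem_support_append_iff _ _).mp hv with h | h
      · exact ⟨(hw1 v h).1, le_trans (hw1 v h).2 (le_of_lt hz2)⟩
      · exact ⟨le_trans (le_of_lt hz1) (hw2 v h).1, (hw2 v h).2⟩

end Aux

/-- If a finite poset `P` contains the standard example `S_3` as a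
subposet, then the cover graph of `P` contains a cycle. -/
theorem coverGraph_has_cycle_of_containsStdExample_three {α : Type*} [Fintype α]
    (P : PartialOrder α) (hS3 : ContainsStdExample P 3) :
    ∃ (v : α) (w : (coverGraph P).Walk v v), w.IsCycle := by
  classical
  letI := P
  by_contra hcyc
  push_neg at hcyc
  have hG : (coverGraph P).IsAcyclic := fun v w => hcyc v w
  obtain ⟨f, hinj, hiff⟩ := hS3
  set a : Fin 3 → α := fun i => f (Sum.inl i) with ha
  set b : Fin 3 → α := fun i => f (Sum.inr i) with hb
  have hlt : ∀ i j : Fin 3, i ≠ j → P.lt (a i) (b j) := fun i j h =>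
    (hiff (Sum.inl i) (Sum.inr j)).1 h
  have hnlt : ∀ i : Fin 3, ¬ P.lt (a i) (b i) := fun i h =>
    ((hiff (Sum.inl i) (Sum.inr i)).2 h) rfl
  have hne : ∀ i : Fin 3, a i ≠ b i := fun i h => Sum.inl_ne_inr (hinj h)
  -- monotone walks
  have mw : ∀ i j : Fin 3, i ≠ j → ∃ w : (coverGraph P).Walk (a i) (b j),
      ∀ v ∈ w.support, P.le (a i) v ∧ P.le v (b j) := fun i j h =>
    exists_mono_walk P _ (a i) (b j) (hlt i j h) le_rfl
  obtain ⟨W01, h01⟩ := mw 0 1 (by decide)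
  obtain ⟨W02, h02⟩ := mw 0 2 (by decide)
  obtain ⟨W10, h10⟩ := mw 1 0 (by decide)
  obtain ⟨W12, h12⟩ := mw 1 2 (by decide)
  obtain ⟨W20, h20⟩ := mw 2 0 (by decide)
  obtain ⟨W21, h21⟩ := mw 2 1 (by decide)
  -- paths between the maximal elements
  set p : (coverGraph P).Path (b 0) (b 1) := (W20.reverse.append W21).toPath with hpdef
  set q : (coverGraph P).Path (b 0) (b 2) := (W10.reverse.append W12).toPath with hqdef
  set r : (coverGraph P).Path (b 1) (b 2) := (W01.reverse.append W02).toPath with hrdef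
  have hpsupp : ∀ v ∈ p.1.support, P.le (a 2) v := by
    intro v hv
    have := SimpleGraph.Walk.support_toPath_subset _ hv
    rcases (SimpleGraph.Walk.mem_support_append_iff _ _).mp this with h | h
    · rw [SimpleGraph.Walk.support_reverse, List.mem_reverse] at h
      exact (h20 v h).1
    · exact (h21 v h).1
  have hqsupp : ∀ v ∈ q.1.support, P.le (a 1) v ∧ (P.le v (b 0) ∨ P.le v (b 2)) := by
    intro v hv
    have := SimpleGraph.Walk.support_toPath_subset _ hv
    rcases (SimpleGraph.Walk.mem_support_append_iff _ _).mp this with h | h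
    · rw [SimpleGraph.Walk.support_reverse, List.mem_reverse] at h
      exact ⟨(h10 v h).1, Or.inl (h10 v h).2⟩
    · exact ⟨(h12 v h).1, Or.inr (h12 v h).2⟩
  have hrsupp : ∀ v ∈ r.1.support, P.le (a 0) v := by
    intro v hv
    have := SimpleGraph.Walk.support_toPath_subset _ hv
    rcases (SimpleGraph.Walk.mem_support_append_iff _ _).mp this with h | h
    · rw [SimpleGraph.Walk.support_reverse, List.mem_reverse] at h
      exact (h01 v h).1
    · exact (h02 v h).1
  obtain ⟨m, hmp, hmq, hmr⟩ := exists_median hG p.2 q.2 r.2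
  have ha2m : P.le (a 2) m := hpsupp m hmp
  have ha0m : P.le (a 0) m := hrsupp m hmr
  obtain ⟨_, hmb0 | hmb2⟩ := hqsupp m hmq
  · exact hnlt 0 (lt_of_le_of_ne (le_trans ha0m hmb0) (hne 0))
  · exact hnlt 2 (lt_of_le_of_ne (le_trans ha2m hmb2) (hne 2))
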